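/- Let δ: R → R be an automorphism with δ^n = id_R, and R[w,δ] the skew polynomial ring with relation w r = δ(r) w. The map δ^⊗ sending r_0 + r_1 w + ... + r_k w^k to δ-bar(r_0) + δ-bar(r_1) H z + ... + δ-bar(r_k) H^k z^k is an injective ring homomorphism from R[w,δ] into M_n(R[z]), where z is a central commuting indeterminate, H is the cyclic permutation matrix, and δ-bar(r) = diag(r, δ(r), ..., δ^{n-1}(r)). -/

import Mathlib

def cyclicH (n : ℕ) (R : Type*) [Ring R] [NeZero n] : Matrix (Fin n) (Fin n) R :=
  fun i j => if j = i + 1 then 1 else 0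

open Fin.NatCast

section Aux
variable {R : Type*} [Ring R] {n : ℕ} [NeZero n]

/-- entries of `Xⁿ H` -/
lemma cyclicM_apply (i j : Fin n) :
    ((Polynomial.X : Polynomial R) • (cyclicH n R).map Polynomial.C) i j
      = if j = i + 1 then (Polynomial.X : Polynomial R) else 0 := by
  by_cases h : j = i + 1 <;> simp [cyclicH, h]

lemma cyclicM_pow_apply (k : ℕ) (i j : Fin n) :
    ((((Polynomial.X : Polynomial R) • (cyclicH n R).map Polynomial.C)) ^ k) i j
      = if j = i + (k : Fin n) then (Polynomial.X : Polynomial R) ^ k else 0 := by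
  induction k generalizing i j with
  | zero => simp [Matrix.one_apply, eq_comm]
  | succ k ih =>
    rw [pow_succ, Matrix.mul_apply]
    simp only [ih, cyclicM_apply, ite_mul, zero_mul, mul_ite, mul_zero]
    rw [Finset.sum_eq_single (i + (k : Fin n))]
    · simp [pow_succ, add_assoc]
    · intro b _ hb; simp [hb]
    · simp

end Aux

section Aux2
variable {R : Type*} [Ring R] {n : ℕ} [NeZero n] (δ : R ≃+* R)

lemma iter_period (hδ : (⇑δ)^[n] = id) (m : ℕ) : (⇑δ)^[m] = (⇑δ)^[m % n] := by
  conv_lhs => rw [← Nat.div_add_mod m n]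
  rw [Function.iterate_add, Function.iterate_mul, hδ, Function.iterate_id, Function.id_comp]

lemma iter_hom (k : ℕ) : ∃ g : R →+* R, ⇑g = (⇑δ)^[k] := by
  induction k with
  | zero => exact ⟨RingHom.id R, rfl⟩
  | succ k ih =>
    obtain ⟨g, hg⟩ := ih
    exact ⟨(δ : R →+* R).comp g, by funext x; simp [hg, Function.iterate_succ_apply']⟩

/-- `δ̄` as a diagonal matrix. -/
noncomputable def Dmat (n : ℕ) [NeZero n] (δ : R ≃+* R) (r : R) :
    Matrix (Fin n) (Fin n) (Polynomial R) :=
  Matrix.diagonal fun k : Fin n => Polynomial.C ((⇑δ)^[(k : ℕ)] r)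

lemma Dmat_zero : Dmat n δ (0 : R) = 0 := by
  ext i j
  obtain ⟨g, hg⟩ := iter_hom δ (i : ℕ)
  by_cases h : i = j <;> simp [Dmat, Matrix.diagonal_apply, h, ← hg]

lemma Dmat_add (a b : R) : Dmat n δ (a + b) = Dmat n δ a + Dmat n δ b := by
  ext i j
  obtain ⟨g, hg⟩ := iter_hom δ (i : ℕ)
  by_cases h : i = j <;> simp [Dmat, Matrix.diagonal_apply, h, ← hg, map_add]

lemma Dmat_one : Dmat n δ (1 : R) = 1 := by
  ext i j
  obtain ⟨g, hg⟩ := iter_hom δ (i : ℕ)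
  by_cases h : i = j <;> simp [Dmat, Matrix.diagonal_apply, Matrix.one_apply, h, ← hg]

lemma Dmat_mul (a b : R) : Dmat n δ (a * b) = Dmat n δ a * Dmat n δ b := by
  rw [Dmat, Dmat, Dmat, Matrix.diagonal_mul_diagonal]
  congr 1; funext i
  obtain ⟨g, hg⟩ := iter_hom δ (i : ℕ)
  simp [← hg, map_mul]

lemma pow_mul_Dmat (hδ : (⇑δ)^[n] = id) (k : ℕ) (r : R) :
    (((Polynomial.X : Polynomial R) • (cyclicH n R).map Polynomial.C)) ^ k * Dmat n δ r
      = Dmat n δ ((⇑δ)^[k] r)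
        * (((Polynomial.X : Polynomial R) • (cyclicH n R).map Polynomial.C)) ^ k := by
  refine Matrix.ext fun i j => ?_
  rw [Dmat, Dmat, Matrix.mul_diagonal, Matrix.diagonal_mul, cyclicM_pow_apply]
  by_cases h : j = i + (k : Fin n)
  · subst h
    rw [if_pos rfl, ← Polynomial.X_pow_mul]
    congr 2
    have h1 : ((i + (k : Fin n) : Fin n) : ℕ) = ((i : ℕ) + k % n) % n := by
      simp [Fin.val_add, Fin.val_natCast]
    rw [h1, ← iter_period δ hδ ((i : ℕ) + k % n), Function.iterate_add_apply,
      ← iter_period δ hδ k]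
  · rw [if_neg h, zero_mul, mul_zero]

end Aux2

section Aux3
variable {R : Type*} [Ring R] {n : ℕ} [NeZero n] (δ : R ≃+* R)

lemma Tsum_coeff (c : ℕ →₀ R) (k : ℕ) :
    ((c.sum fun m a =>
        Dmat n δ a * (((Polynomial.X : Polynomial R) • (cyclicH n R).map Polynomial.C)) ^ m)
      0 ((k : Fin n))).coeff k = c k := by
  classical
  rw [Finsupp.sum, Matrix.sum_apply, Polynomial.finset_sum_coeff]
  rw [Finset.sum_eq_single k]
  · simp [Dmat, Matrix.diagonal_mul, cyclicM_pow_apply, Polynomial.coeff_C_mul,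
      Polynomial.coeff_X_pow]
  · intro b _ hb
    simp only [Dmat, Matrix.diagonal_mul, cyclicM_pow_apply]
    split_ifs with h
    · simp [Polynomial.coeff_C_mul, Polynomial.coeff_X_pow, Ne.symm hb]
    · simp
  · intro hk
    simp [Finsupp.notMem_support_iff.mp hk, Dmat_zero]

end Aux3
theorem stmt_10 {R S : Type*} [Ring R] [Ring S] {n : ℕ} [NeZero n]
    (δ : R ≃+* R) (hδ : (⇑δ)^[n] = id)
    (ι : R →+* S) (w : S)
    (hw : ∀ r : R, w * ι r = ι (δ r) * w)
    (hinj : Function.Injective ι)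
    (hspan : ∀ s : S, ∃ c : ℕ →₀ R, s = c.sum fun k r => ι r * w ^ k)
    (huniq : ∀ c c' : ℕ →₀ R,
      (c.sum fun k r => ι r * w ^ k) = (c'.sum fun k r => ι r * w ^ k) → c = c') :
    ∃ Φ : S →+* Matrix (Fin n) (Fin n) (Polynomial R),
      Function.Injective Φ ∧
      (∀ r : R, Φ (ι r) =
        Matrix.diagonal fun k : Fin n => Polynomial.C ((⇑δ)^[(k : ℕ)] r)) ∧
      Φ w = (Polynomial.X : Polynomial R) • (cyclicH n R).map Polynomial.C := by
  classical
  set M : Matrix (Fin n) (Fin n) (Polynomial R) :=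
    (Polynomial.X : Polynomial R) • (cyclicH n R).map Polynomial.C with hM
  have hMD : ∀ (k : ℕ) (r : R),
      M ^ k * Dmat n δ r = Dmat n δ ((⇑δ)^[k] r) * M ^ k := by
    intro k r
    rw [hM]
    exact pow_mul_Dmat δ hδ k r
  have hWι : ∀ (k : ℕ) (r : R), w ^ k * ι r = ι ((⇑δ)^[k] r) * w ^ k := by
    intro k
    induction k with
    | zero => intro r; simp
    | succ k ih =>
      intro r
      rw [pow_succ, mul_assoc, hw, ← mul_assoc, ih, mul_assoc, ← pow_succ,
        Function.iterate_succ_apply]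
  set φ : S → Matrix (Fin n) (Fin n) (Polynomial R) :=
    fun s => (Classical.choose (hspan s)).sum fun k r => Dmat n δ r * M ^ k with hφdef
  have hφ : ∀ c : ℕ →₀ R,
      φ (c.sum fun k r => ι r * w ^ k) = c.sum fun k r => Dmat n δ r * M ^ k := by
    intro c
    have h := Classical.choose_spec (hspan (c.sum fun k r => ι r * w ^ k))
    have h2 := huniq _ _ h.symm
    simp only [hφdef]
    exact congrArg (fun d : ℕ →₀ R => d.sum fun k r => Dmat n δ r * M ^ k) h2
  have φ0 : φ 0 = 0 := by
    have := hφ 0; simpa using this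
  have hadd : ∀ s t, φ (s + t) = φ s + φ t := by
    intro s t
    obtain ⟨c, rfl⟩ := hspan s
    obtain ⟨c', rfl⟩ := hspan t
    rw [← Finsupp.sum_add_index' (fun k => by simp) (fun k a b => by rw [map_add, add_mul]),
      hφ, hφ, hφ,
      Finsupp.sum_add_index' (fun k => by simp [Dmat_zero])
        (fun k a b => by rw [Dmat_add, add_mul])]
  have hφsum : ∀ (c : ℕ →₀ R) (F : ℕ → R → S),
      φ (c.sum F) = c.sum fun k r => φ (F k r) :=
    fun c F => map_finsuppSum (AddMonoidHom.mk' φ hadd) c F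
  have hsingle : ∀ (k : ℕ) (r : R) (t : S),
      φ (ι r * w ^ k * t) = Dmat n δ r * M ^ k * φ t := by
    intro k r t
    obtain ⟨c, rfl⟩ := hspan t
    obtain ⟨g, hg⟩ := iter_hom δ k
    set cg : ℕ →₀ R := Finsupp.mapDomain (k + ·)
      (c.mapRange (fun x => r * g x) (by simp)) with hcg
    have e1 : ι r * w ^ k * (c.sum fun m a => ι a * w ^ m)
        = cg.sum fun m a => ι a * w ^ m := by
      rw [hcg, Finsupp.sum_mapDomain_index_inj (add_right_injective k),
        Finsupp.sum_mapRange_index (by intro m; simp), Finsupp.mul_sum]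
      refine Finsupp.sum_congr fun m hm => ?_
      rw [← mul_assoc, mul_assoc (ι r), hWι, ← mul_assoc, ← map_mul, mul_assoc,
        ← pow_add, ← hg]
    have e2 : Dmat n δ r * M ^ k * (c.sum fun m a => Dmat n δ a * M ^ m)
        = cg.sum fun m a => Dmat n δ a * M ^ m := by
      rw [hcg, Finsupp.sum_mapDomain_index_inj (add_right_injective k),
        Finsupp.sum_mapRange_index (by intro m; simp [Dmat_zero]), Finsupp.mul_sum]
      refine Finsupp.sum_congr fun m hm => ?_
      rw [← mul_assoc, mul_assoc (Dmat n δ r), hMD, ← mul_assoc, ← Dmat_mul, mul_assoc,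
        ← pow_add, ← hg]
    rw [e1, hφ, hφ, ← e2]
  have hmul : ∀ s t, φ (s * t) = φ s * φ t := by
    intro s t
    obtain ⟨c, rfl⟩ := hspan s
    rw [hφ, Finsupp.sum_mul, Finsupp.sum_mul, hφsum]
    exact Finsupp.sum_congr fun k hk => hsingle k (c k) t
  have hone : φ 1 = 1 := by
    have h1 : (1 : S) = (Finsupp.single 0 (1 : R)).sum fun k r => ι r * w ^ k := by
      rw [Finsupp.sum_single_index (by simp)]; simp
    rw [h1, hφ, Finsupp.sum_single_index (by simp [Dmat_zero]), Dmat_one, pow_zero, one_mul]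
  let Φ : S →+* Matrix (Fin n) (Fin n) (Polynomial R) :=
    { toFun := φ
      map_one' := hone
      map_mul' := hmul
      map_zero' := φ0
      map_add' := hadd }
  refine ⟨Φ, ?_, ?_, ?_⟩
  · intro s t h
    obtain ⟨c, rfl⟩ := hspan s
    obtain ⟨c', rfl⟩ := hspan t
    have h' : φ (c.sum fun k r => ι r * w ^ k) = φ (c'.sum fun k r => ι r * w ^ k) := h
    rw [hφ, hφ] at h'
    have hcc : c = c' := by
      ext k
      rw [← Tsum_coeff (n := n) δ c k, ← Tsum_coeff (n := n) δ c' k, ← hM, h']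
    rw [hcc]
  · intro r
    have h1 : ι r = (Finsupp.single 0 r).sum fun k a => ι a * w ^ k := by
      rw [Finsupp.sum_single_index (by simp)]; simp
    show φ (ι r) = _
    rw [h1, hφ, Finsupp.sum_single_index (by simp [Dmat_zero]), pow_zero, mul_one]
    rfl
  · have h1 : w = (Finsupp.single 1 (1 : R)).sum fun k a => ι a * w ^ k := by
      rw [Finsupp.sum_single_index (by simp)]; simp
    show φ w = _
    rw [h1, hφ, Finsupp.sum_single_index (by simp [Dmat_zero]), Dmat_one, pow_one, one_mul]
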